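/- Let n be a positive integer and define β₂(β₁) := (nβ₁ − 3 + √(3(3−nβ₁)(1+nβ₁)))/(2n) for β₁ ∈ (0, 2/n). Then β₂(β₁) = β₁ − (n/3)β₁² + O(β₁³) as β₁ → 0⁺; that is, (β₂(β₁) − β₁ + (n/3)β₁²)/β₁³ is bounded as β₁ → 0⁺. -/
import Mathlib


open Filter Topology Asymptotics

set_option maxHeartbeats 1600000 in
theorem stmt_8 (n : ℕ) (hn : 0 < n)
    (β₂ : ℝ → ℝ)
    (hβ₂ : ∀ β₁ ∈ Set.Ioo (0 : ℝ) (2 / n),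
      β₂ β₁ = ((n : ℝ) * β₁ - 3 + Real.sqrt (3 * (3 - n * β₁) * (1 + n * β₁))) /
        (2 * n)) :
    (fun β₁ => β₂ β₁ - (β₁ - (n / 3) * β₁ ^ 2)) =O[𝓝[>] (0 : ℝ)]
      (fun β₁ => β₁ ^ 3) := by
  have hn' : (0:ℝ) < n := by exact_mod_cast hn
  rw [Asymptotics.isBigO_iff]
  refine ⟨(n:ℝ)^2/6, ?_⟩
  have h2n : (0:ℝ) < 2 / n := by positivity
  filter_upwards [Ioo_mem_nhdsGT_of_mem (Set.mem_Ico.mpr ⟨le_refl (0:ℝ), h2n⟩)]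
    with β hβ
  obtain ⟨hβ0, hβ2⟩ := hβ
  set x : ℝ := (n:ℝ) * β with hx
  have hx0 : 0 < x := by positivity
  have hx2 : x < 2 := by
    rw [hx]
    calc (n:ℝ) * β < (n:ℝ) * (2 / n) := mul_lt_mul_of_pos_left hβ2 hn'
      _ = 2 := by field_simp
  have hApos : (0:ℝ) < 3 * (3 - x) * (1 + x) := by nlinarith
  obtain ⟨s, hsdef⟩ : ∃ s, s = Real.sqrt (3 * (3 - x) * (1 + x)) := ⟨_, rfl⟩
  have hs0 : 0 ≤ s := hsdef ▸ Real.sqrt_nonneg _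
  have hs2 : s ^ 2 = 9 + 6*x - 3*x^2 := by
    rw [hsdef, Real.sq_sqrt hApos.le]; ring
  have hs3 : 3 ≤ s := by nlinarith [mul_pos hx0 (by linarith : (0:ℝ) < 2 - x)]
  have key : |s - (3 + x - (2/3)*x^2)| ≤ x^3/3 := by
    rw [abs_le]
    constructor
    · -- lower bound
      have hsum : 0 < s + (3 + x - (2/3)*x^2 - x^3/3) := by nlinarith
      have hfac : (0:ℝ) < 30 + 2*x - 4*x^2 - x^3 := by nlinarith
      have hpoly : (3 + x - (2/3)*x^2 - x^3/3)^2 ≤ s^2 := by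
        rw [hs2]
        nlinarith [mul_pos (pow_pos hx0 3) hfac]
      nlinarith [hpoly, hsum]
    · -- upper bound
      have hU : 0 < s + (3 + x - (2/3)*x^2 + x^3/3) := by nlinarith
      have hfac : (0:ℝ) < 6 + 10*x - 4*x^2 + x^3 := by nlinarith
      have hpoly : s^2 ≤ (3 + x - (2/3)*x^2 + x^3/3)^2 := by
        rw [hs2]
        nlinarith [mul_pos (pow_pos hx0 3) hfac]
      nlinarith [hpoly, hU]
  have heq : β₂ β - (β - ((n:ℝ) / 3) * β ^ 2) = (s - (3 + x - (2/3)*x^2)) / (2*(n:ℝ)) := by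
    rw [hβ₂ β ⟨hβ0, hβ2⟩,
      show (3:ℝ) * (3 - (n:ℝ)*β) * (1 + (n:ℝ)*β) = 3 * (3 - x) * (1 + x) by rw [hx],
      ← hsdef, hx]
    field_simp
    ring
  rw [heq, Real.norm_eq_abs, Real.norm_eq_abs, abs_div,
    abs_of_pos (by positivity : (0:ℝ) < 2*(n:ℝ)),
    abs_of_pos (by positivity : (0:ℝ) < β^3),
    div_le_iff₀ (by positivity)]
  have hx3 : x^3 = (n:ℝ)^3 * β^3 := by rw [hx]; ring
  calc |s - (3 + x - (2/3)*x^2)| ≤ x^3/3 := key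
    _ = (n:ℝ)^2/6 * β^3 * (2*(n:ℝ)) := by rw [hx3]; ring
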